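/- The screw-parameter extraction is a left inverse of the construction: starting from screw parameters (θ, d, l, m) with 0 < θ < 2π, ‖l‖ = 1, l·m = 0, building the dual quaternion via w_r = cos(θ/2), v_r = l sin(θ/2), w_d = −(d/2)sin(θ/2), v_d = sin(θ/2)m + (d/2)cos(θ/2)l, and then computing θ′ = 2 arccos(w_r), d′ = −2 w_d / ‖v_r‖, l′ = v_r / ‖v_r‖, m′ = (v_d − l′ (d′ w_r / 2)) / ‖v_r‖ recovers (θ, d, l, m). -/

import Mathlib

open Real

/-- Screw-parameter extraction is a left inverse of the screw-to-dual-quaternion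
construction: for `0 < θ < 2π`, `‖l‖ = 1`, `l·m = 0`, building
`w_r = cos(θ/2)`, `v_r = sin(θ/2) l`, `w_d = −(d/2)sin(θ/2)`,
`v_d = sin(θ/2) m + (d/2)cos(θ/2) l` and extracting
`θ′ = 2 arccos(w_r)`, `d′ = −2 w_d / ‖v_r‖`, `l′ = v_r / ‖v_r‖`,
`m′ = (v_d − l′ (d′ w_r / 2)) / ‖v_r‖` recovers `(θ, d, l, m)`. -/
theorem screw_roundtrip (θ d : ℝ) (l m : EuclideanSpace ℝ (Fin 3))
    (h0 : 0 < θ) (h2 : θ < 2 * π) (hl : ‖l‖ = 1) (hlm : (inner ℝ l m : ℝ) = 0) :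
    let wr : ℝ := Real.cos (θ / 2)
    let vr : EuclideanSpace ℝ (Fin 3) := Real.sin (θ / 2) • l
    let wd : ℝ := -(d / 2) * Real.sin (θ / 2)
    let vd : EuclideanSpace ℝ (Fin 3) :=
      Real.sin (θ / 2) • m + ((d / 2) * Real.cos (θ / 2)) • l
    let θ' : ℝ := 2 * Real.arccos wr
    let d' : ℝ := -2 * wd / ‖vr‖
    let l' : EuclideanSpace ℝ (Fin 3) := ‖vr‖⁻¹ • vr
    let m' : EuclideanSpace ℝ (Fin 3) := ‖vr‖⁻¹ • (vd - (d' * wr / 2) • l')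
    θ' = θ ∧ d' = d ∧ l' = l ∧ m' = m := by
  intro wr vr wd vd θ' d' l' m'
  have hs : 0 < Real.sin (θ / 2) := by
    apply Real.sin_pos_of_pos_of_lt_pi <;> linarith
  have hvr : ‖vr‖ = Real.sin (θ / 2) := by
    simp [vr, norm_smul, hl, abs_of_pos hs]
  have hθ' : θ' = θ := by
    have : Real.arccos (Real.cos (θ / 2)) = θ / 2 :=
      Real.arccos_cos (by linarith) (by linarith)
    simp [θ', wr, this]; ring
  have hd' : d' = d := by
    simp only [d', wd, hvr]
    field_simp [hs.ne']
  have hl' : l' = l := by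
    simp [l', vr, hvr, smul_smul, inv_mul_cancel₀ hs.ne']
  refine ⟨hθ', hd', hl', ?_⟩
  simp only [m', hl', hd', hvr, vd, wr]
  rw [smul_sub, smul_add, smul_smul, smul_smul, smul_smul,
    inv_mul_cancel₀ hs.ne']
  have : Real.sin (θ/2)⁻¹ * (d * Real.cos (θ/2) / 2) = Real.sin (θ/2)⁻¹ * (d / 2 * Real.cos (θ/2)) := by ring
  simp [smul_smul]
  rw [show (Real.sin (θ/2))⁻¹ * (d * Real.cos (θ/2) / 2) = (Real.sin (θ/2))⁻¹ * (d / 2 * Real.cos (θ/2)) by ring]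
  abel
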